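/- Let (A; {E_i}; A*; {E*_i}) be a Leonard system with dual switching element S*. Then for 0 ≤ i ≤ d, S* η_i(A) E*_0 = [(ϕ_1 ϕ_2 ⋯ ϕ_i)/(φ_1 φ_2 ⋯ φ_i)] τ_i(A) E*_0, where τ_i(λ) = (λ-θ_0)⋯(λ-θ_{i-1}) and η_i(λ) = (λ-θ_d)⋯(λ-θ_{d-i+1}). -/

import Mathlib

open Polynomial

/-- The primitive idempotent `E_i = ∏_{j ≠ i} (A - θ_j I)/(θ_i - θ_j)` of a
multiplicity-free operator `A` with eigenvalues `θ_0, …, θ_d`. -/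
noncomputable def primIdem {K : Type} [Field K] {V : Type} [AddCommGroup V] [Module K V]
    {d : ℕ} (A : Module.End K V) (θ : Fin (d+1) → K) (i : Fin (d+1)) : Module.End K V :=
  Polynomial.aeval A (∏ j ∈ Finset.univ.erase i, ((θ i - θ j)⁻¹ • (X - C (θ j))))

section MF
variable {K : Type} [Field K] {V : Type} [AddCommGroup V] [Module K V] {d : ℕ}
variable (A : Module.End K V) (θ : Fin (d+1) → K)

lemma primIdem_eq_lagrange (i : Fin (d+1)) :
    primIdem A θ i = aeval A (Lagrange.basis Finset.univ θ i) := by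
  unfold primIdem Lagrange.basis Lagrange.basisDivisor
  simp_rw [smul_eq_C_mul]

lemma lag_mul_X_sub_C (i : Fin (d+1)) :
    (Lagrange.basis Finset.univ θ i) * (X - C (θ i)) =
      C (∏ j ∈ Finset.univ.erase i, (θ i - θ j)⁻¹) * ∏ j : Fin (d+1), (X - C (θ j)) := by
  unfold Lagrange.basis Lagrange.basisDivisor
  rw [Finset.prod_mul_distrib, mul_assoc]
  congr 1
  · exact (map_prod (C : K →+* K[X]) _ _).symm
  · rw [mul_comm]
    exact Finset.mul_prod_erase _ (fun j => X - C (θ j)) (Finset.mem_univ i)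

variable (hfin : FiniteDimensional K V) (hdim : Module.finrank K V = d + 1)
  (hinj : Function.Injective θ) (hEig : ∀ i, Module.End.HasEigenvalue A (θ i))

include hfin hdim hinj hEig in
lemma mf_minpoly : minpoly K A = ∏ j : Fin (d+1), (X - C (θ j)) := by
  have hint : IsIntegral K A := LinearMap.isIntegral A
  have hmon : (minpoly K A).Monic := minpoly.monic hint
  have hne : minpoly K A ≠ 0 := hmon.ne_zero
  -- the multiset of θ's is ≤ roots of minpoly
  have hroot : ∀ i, θ i ∈ (minpoly K A).roots := by
    intro i
    rw [mem_roots hne]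
    exact (Module.End.hasEigenvalue_iff_isRoot).1 (hEig i)
  have hle : (Finset.univ.val.map θ) ≤ (minpoly K A).roots := by
    classical
    refine Multiset.le_iff_count.2 (fun a => ?_)
    by_cases ha : a ∈ Finset.univ.val.map θ
    · have hnd : (Finset.univ.val.map θ).Nodup :=
        Finset.univ.nodup.map hinj
      rw [Multiset.count_eq_one_of_mem hnd ha]
      obtain ⟨i, _, rfl⟩ := Multiset.mem_map.1 ha
      exact Multiset.one_le_count_iff_mem.2 ((mem_roots hne).2
        ((Module.End.hasEigenvalue_iff_isRoot).1 (hEig i)))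
    · rw [Multiset.count_eq_zero_of_notMem ha]; exact Nat.zero_le _
  have hdvd : (∏ j : Fin (d+1), (X - C (θ j))) ∣ minpoly K A := by
    have h1 : (∏ j : Fin (d+1), (X - C (θ j)))
        = ((Finset.univ.val.map θ).map (fun a => X - C a)).prod := by
      rw [Finset.prod]
      rw [Multiset.map_map]
      rfl
    rw [h1]
    exact dvd_trans (Multiset.prod_dvd_prod_of_le (Multiset.map_le_map hle))
      (prod_multiset_X_sub_C_dvd _)
  -- degrees
  have hqmon : (∏ j : Fin (d+1), (X - C (θ j))).Monic :=
    monic_prod_of_monic _ _ (fun j _ => monic_X_sub_C _)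
  have hqdeg : (∏ j : Fin (d+1), (X - C (θ j))).natDegree = d + 1 := by
    rw [natDegree_prod_of_monic _ _ (fun j _ => monic_X_sub_C _)]
    simp
  have hdegle : (minpoly K A).natDegree ≤ d + 1 := by
    have := Polynomial.natDegree_le_of_dvd
      (LinearMap.minpoly_dvd_charpoly A) (LinearMap.charpoly_monic A).ne_zero
    rwa [LinearMap.charpoly_natDegree, hdim] at this
  obtain ⟨r, hr⟩ := hdvd
  have hrne : r ≠ 0 := by rintro rfl; rw [mul_zero] at hr; exact hne hr
  have hdegr : r.natDegree = 0 := by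
    have := natDegree_mul (hqmon.ne_zero) hrne
    rw [← hr] at this
    omega
  have hrmon : r.Monic := by
    have := hmon
    rw [hr] at this
    exact hqmon.of_mul_monic_left this
  rw [hr, Polynomial.eq_one_of_monic_natDegree_zero hrmon hdegr, mul_one]

include hfin hdim hinj hEig in
lemma mf_aeval_zero {p : K[X]} (hp : (∏ j : Fin (d+1), (X - C (θ j))) ∣ p) :
    aeval A p = 0 := by
  obtain ⟨r, rfl⟩ := hp
  rw [map_mul, ← mf_minpoly A θ hfin hdim hinj hEig, minpoly.aeval, zero_mul]



include hfin hdim hinj hEig in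
lemma mf_E_mul_aeval (i : Fin (d+1)) (p : K[X]) :
    primIdem A θ i * aeval A p = eval (θ i) p • primIdem A θ i := by
  rw [primIdem_eq_lagrange, ← map_mul, ← map_smul]
  rw [← sub_eq_zero, ← map_sub]
  apply mf_aeval_zero A θ hfin hdim hinj hEig
  obtain ⟨h, hh⟩ := Polynomial.X_sub_C_dvd_sub_C_eval (a := θ i) (p := p)
  have : Lagrange.basis Finset.univ θ i * p - eval (θ i) p • Lagrange.basis Finset.univ θ i
      = (C (∏ j ∈ Finset.univ.erase i, (θ i - θ j)⁻¹) * ∏ j : Fin (d+1), (X - C (θ j))) * h := by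
    rw [smul_eq_C_mul, mul_comm (C (eval (θ i) p)), ← mul_sub, hh, ← mul_assoc,
      lag_mul_X_sub_C]
  rw [this]
  exact ⟨C (∏ j ∈ Finset.univ.erase i, (θ i - θ j)⁻¹) * h, by ring⟩

omit hfin hdim hEig in
include hinj in
lemma mf_sum_E : ∑ i : Fin (d+1), primIdem A θ i = 1 := by
  have := Lagrange.sum_basis (v := θ) (s := Finset.univ) (hinj.injOn) ⟨0, Finset.mem_univ 0⟩
  calc ∑ i : Fin (d+1), primIdem A θ i
      = aeval A (∑ i : Fin (d+1), Lagrange.basis Finset.univ θ i) := by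
        rw [map_sum]; exact Finset.sum_congr rfl (fun i _ => primIdem_eq_lagrange A θ i)
    _ = 1 := by rw [this, map_one]

omit hfin hdim hEig in
include hinj in
lemma mf_E_eigen (i j : Fin (d+1)) {x : V} (hx : A x = θ j • x) :
    primIdem A θ i x = if i = j then x else 0 := by
  by_cases hxz : x = 0
  · simp [hxz]
  have hev : Module.End.HasEigenvector A (θ j) x := by
    constructor
    · rw [Module.End.mem_eigenspace_iff]; exact hx
    · exact hxz
  rw [primIdem_eq_lagrange]
  rw [Module.End.aeval_apply_of_hasEigenvector hev]
  rcases eq_or_ne i j with rfl | hij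
  · rw [Lagrange.eval_basis_self hinj.injOn (Finset.mem_univ i), one_smul, if_pos rfl]
  · rw [Lagrange.eval_basis_of_ne hij (Finset.mem_univ j), zero_smul, if_neg hij]

end MF



structure Tri (K V : Type) [Field K] [AddCommGroup V] [Module K V] (d : ℕ) where
  P : ℕ → Module.End K V
  B : Module.End K V
  x : ℕ → V
  hx : ∀ n, n ≤ d → x n ≠ 0
  hP0 : ∀ n, d < n → P n = 0
  hPx : ∀ n, n ≤ d → ∀ m, m ≤ d → P n (x m) = if n = m then x m else 0
  hsum : ∀ w : V, ∑ n ∈ Finset.range (d+1), P n w = w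
  hspan : ∀ n w, ∃ c : K, P n w = c • x n
  hfar : ∀ n m, (n+1 < m ∨ m+1 < n) → ∀ w, P n (B (P m w)) = 0
  hnear : ∀ n m, n ≤ d → m ≤ d → (n+1 = m ∨ m+1 = n) → ∃ w, P n (B (P m w)) ≠ 0

namespace Tri
variable {K V : Type} [Field K] [AddCommGroup V] [Module K V] {d : ℕ} (T : Tri K V d)

lemma nearx {n m : ℕ} (hn : n ≤ d) (hm : m ≤ d) (h : n+1 = m ∨ m+1 = n) :
    T.P n (T.B (T.x m)) ≠ 0 := by
  obtain ⟨w, hw⟩ := T.hnear n m hn hm h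
  obtain ⟨c, hc⟩ := T.hspan m w
  rw [hc, map_smul, map_smul] at hw
  intro h0
  rw [h0, smul_zero] at hw
  exact hw rfl

lemma comp_B (r : ℕ) (w : V) :
    T.P r (T.B w) = ∑ s ∈ Finset.range (d+1), T.P r (T.B (T.P s w)) := by
  conv_lhs => rw [← T.hsum w]
  rw [map_sum, map_sum]

lemma raise_pow {w : V} {j : ℕ} (hw : ∀ r, j < r → T.P r w = 0) (m : ℕ) :
    ∀ r, j + m < r → T.P r ((T.B^m) w) = 0 := by
  induction m with
  | zero => intro r hr; simpa using hw r (by omega)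
  | succ m ih =>
    intro r hr
    have hBm : (T.B^(m+1)) w = T.B ((T.B^m) w) := by
      rw [pow_succ']; rfl
    rw [hBm, comp_B]
    refine Finset.sum_eq_zero (fun s hs => ?_)
    rcases le_or_gt s (j+m) with h | h
    · exact T.hfar r s (Or.inr (by omega)) _
    · rw [ih s h, map_zero, map_zero]

lemma raise_aeval {w : V} {j : ℕ} (hw : ∀ r, j < r → T.P r w = 0) {p : K[X]} {m : ℕ}
    (hdeg : p.natDegree ≤ m) : ∀ r, j + m < r → T.P r ((aeval T.B p) w) = 0 := by
  intro r hr
  have hexp : (aeval T.B p) w = ∑ k ∈ Finset.range (m+1), p.coeff k • ((T.B^k) w) := by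
    rw [Polynomial.aeval_eq_sum_range' (Nat.lt_succ_of_le hdeg)]
    simp [LinearMap.sum_apply]
  rw [hexp, map_sum]
  refine Finset.sum_eq_zero (fun k hk => ?_)
  rw [map_smul, raise_pow T hw k r (by simp at hk; omega), smul_zero]

lemma chain_ne {w : V} {j : ℕ} (hw : ∀ r, j < r → T.P r w = 0) (hj : T.P j w ≠ 0) :
    ∀ m, j + m ≤ d → T.P (j+m) ((T.B^m) w) ≠ 0 := by
  intro m
  induction m with
  | zero => intro _; simpa using hj
  | succ m ih =>
    intro hle
    have hym : ∀ r, j + m < r → T.P r ((T.B^m) w) = 0 := raise_pow T hw m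
    have hne : T.P (j+m) ((T.B^m) w) ≠ 0 := ih (by omega)
    have hkey : T.P (j+m+1) (T.B ((T.B^m) w))
        = T.P (j+m+1) (T.B (T.P (j+m) ((T.B^m) w))) := by
      rw [comp_B]
      rw [Finset.sum_eq_single (j+m)]
      · intro s hs hne'
        rcases lt_or_gt_of_ne hne' with h | h
        · exact T.hfar (j+m+1) s (Or.inr (by omega)) _
        · rw [hym s h, map_zero, map_zero]
      · intro h; simp at h; omega
    obtain ⟨c, hc⟩ := T.hspan (j+m) ((T.B^m) w)
    have hcne : c ≠ 0 := by
      intro h0; rw [h0, zero_smul] at hc; exact hne hc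
    have hBm : (T.B^(m+1)) w = T.B ((T.B^m) w) := by rw [pow_succ']; rfl
    rw [show j + (m+1) = j+m+1 by omega, hBm, hkey, hc, map_smul, map_smul]
    exact smul_ne_zero hcne (T.nearx (by omega) (by omega) (Or.inr rfl))

lemma eq_zero_of_ann {w : V} {j : ℕ} (hj : j ≤ d) (hw : ∀ r, j < r → T.P r w = 0)
    {p : K[X]} (hmon : p.Monic) (hdeg : p.natDegree ≤ d - j)
    (hann : (aeval T.B p) w = 0) : w = 0 := by
  by_contra hw0
  have hex : ∃ r ∈ Finset.range (d+1), T.P r w ≠ 0 := by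
    by_contra hall
    push_neg at hall
    apply hw0
    rw [← T.hsum w]
    exact Finset.sum_eq_zero hall
  classical
  set s := (Finset.range (d+1)).filter (fun r => T.P r w ≠ 0) with hs
  have hsne : s.Nonempty := by
    obtain ⟨r, hr1, hr2⟩ := hex
    exact ⟨r, Finset.mem_filter.2 ⟨hr1, hr2⟩⟩
  set r0 := s.max' hsne with hr0
  have hr0mem := s.max'_mem hsne
  have hr0ne : T.P r0 w ≠ 0 := (Finset.mem_filter.1 hr0mem).2
  have hr0le : r0 ≤ j := by
    by_contra h
    exact hr0ne (hw r0 (by omega))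
  have hr0max : ∀ r, r0 < r → T.P r w = 0 := by
    intro r hr
    rcases le_or_gt r d with h | h
    · by_contra hne
      have : r ∈ s := Finset.mem_filter.2 ⟨Finset.mem_range.2 (by omega), hne⟩
      have := s.le_max' r this
      omega
    · rw [T.hP0 r h]; rfl
  set m := p.natDegree with hm
  have h0 : T.P (r0+m) ((aeval T.B p) w) = 0 := by rw [hann, map_zero]
  have hexp : (aeval T.B p) w = ∑ k ∈ Finset.range (m+1), p.coeff k • ((T.B^k) w) := by
    rw [Polynomial.aeval_eq_sum_range' (Nat.lt_succ_of_le (le_refl m))]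
    simp [LinearMap.sum_apply]
  rw [hexp, map_sum] at h0
  simp only [map_smul] at h0
  rw [Finset.sum_eq_single m] at h0
  · rw [Polynomial.Monic.coeff_natDegree hmon, one_smul] at h0
    exact T.chain_ne hr0max hr0ne m (by omega) h0
  · intro k hk hkne
    rw [raise_pow T hr0max k (r0+m) (by simp at hk; omega), smul_zero]
  · intro h; simp at h

def refl (T : Tri K V d) : Tri K V d where
  P n := if n ≤ d then T.P (d-n) else 0
  B := T.B
  x n := if n ≤ d then T.x (d-n) else T.x 0
  hx n hn := by simp only [if_pos hn]; exact T.hx _ (by omega)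
  hP0 n hn := by simp only [if_neg (by omega : ¬ n ≤ d)]
  hPx n hn m hm := by
    simp only [if_pos hn, if_pos hm]
    rw [T.hPx _ (by omega) _ (by omega)]
    by_cases h : n = m
    · subst h; simp
    · rw [if_neg (by omega), if_neg h]
  hsum w := by
    have := Finset.sum_range_reflect (fun n => T.P n w) (d+1)
    calc ∑ n ∈ Finset.range (d+1), (if n ≤ d then T.P (d-n) else 0) w
        = ∑ n ∈ Finset.range (d+1), T.P (d-n) w := by
          refine Finset.sum_congr rfl (fun n hn => ?_)
          rw [if_pos (by simp at hn; omega)]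
      _ = ∑ n ∈ Finset.range (d+1), T.P n w := by
          rw [← this]
          refine Finset.sum_congr rfl (fun n hn => ?_)
          norm_num
      _ = w := T.hsum w
  hspan n w := by
    by_cases hn : n ≤ d
    · simp only [if_pos hn]; exact T.hspan _ w
    · exact ⟨0, by simp [if_neg hn]⟩
  hfar n m h w := by
    by_cases hn : n ≤ d
    · by_cases hm : m ≤ d
      · simp only [if_pos hn, if_pos hm]
        exact T.hfar _ _ (by omega) _
      · simp [if_neg hm]
    · simp [if_neg hn]
  hnear n m hn hm h := by
    obtain ⟨w, hw⟩ := T.hnear (d-n) (d-m) (by omega) (by omega) (by omega)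
    exact ⟨w, by simpa [if_pos hn, if_pos hm] using hw⟩

end Tri


/-- The polynomial `τ_i(λ) = (λ-θ_0)(λ-θ_1)⋯(λ-θ_{i-1})`. -/
noncomputable def tauP {K : Type} [Field K] (d : ℕ) (θ : Fin (d+1) → K) (i : ℕ) :
    Polynomial K :=
  ∏ k ∈ Finset.univ.filter (fun k : Fin (d+1) => (k : ℕ) < i), (X - C (θ k))

/-- The polynomial `η_i(λ) = (λ-θ_d)(λ-θ_{d-1})⋯(λ-θ_{d-i+1})`. -/
noncomputable def etaP {K : Type} [Field K] (d : ℕ) (θ : Fin (d+1) → K) (i : ℕ) :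
    Polynomial K :=
  ∏ k ∈ Finset.univ.filter (fun k : Fin (d+1) => d - i < (k : ℕ)), (X - C (θ k))

/-- A Leonard system on a `(d+1)`-dimensional vector space `V` over a field `K`. -/
structure LeonardSystem (K V : Type) [Field K] [AddCommGroup V] [Module K V] (d : ℕ) where
  A : Module.End K V
  As : Module.End K V
  θ : Fin (d+1) → K
  θs : Fin (d+1) → K
  hfin : FiniteDimensional K V
  hdim : Module.finrank K V = d + 1
  θ_inj : Function.Injective θ
  θs_inj : Function.Injective θs
  hEig : ∀ i, Module.End.HasEigenvalue A (θ i)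
  hEigs : ∀ i, Module.End.HasEigenvalue As (θs i)
  hFar : ∀ i j : Fin (d+1), ((i:ℕ) + 1 < j ∨ (j:ℕ) + 1 < i) →
    primIdem A θ i * As * primIdem A θ j = 0
  hNear : ∀ i j : Fin (d+1), ((i:ℕ) + 1 = j ∨ (j:ℕ) + 1 = i) →
    primIdem A θ i * As * primIdem A θ j ≠ 0
  hFars : ∀ i j : Fin (d+1), ((i:ℕ) + 1 < j ∨ (j:ℕ) + 1 < i) →
    primIdem As θs i * A * primIdem As θs j = 0
  hNears : ∀ i j : Fin (d+1), ((i:ℕ) + 1 = j ∨ (j:ℕ) + 1 = i) →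
    primIdem As θs i * A * primIdem As θs j ≠ 0

namespace LeonardSystem

variable {K : Type} [Field K] {V : Type} [AddCommGroup V] [Module K V] {d : ℕ}
  (L : LeonardSystem K V d)

/-- `E_i`, the `i`-th primitive idempotent of `A`. -/
noncomputable def E (i : Fin (d+1)) : Module.End K V := primIdem L.A L.θ i

/-- `E*_i`, the `i`-th primitive idempotent of `A*`. -/
noncomputable def Es (i : Fin (d+1)) : Module.End K V := primIdem L.As L.θs i

/-- `τ_i(A)`. -/
noncomputable def tau (i : ℕ) : Module.End K V := Polynomial.aeval L.A (tauP d L.θ i)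

/-- `η_i(A)`. -/
noncomputable def eta (i : ℕ) : Module.End K V := Polynomial.aeval L.A (etaP d L.θ i)

/-- The first split sequence `φ_i = (θ*_0-θ*_i) tr(τ_i(A)E*_0)/tr(τ_{i-1}(A)E*_0)`,
meaningful for `1 ≤ i ≤ d`. -/
noncomputable def φ (i : ℕ) : K :=
  if h : i < d + 1 then
    (L.θs 0 - L.θs ⟨i, h⟩) * (LinearMap.trace K V (L.tau i * L.Es 0))
      / (LinearMap.trace K V (L.tau (i-1) * L.Es 0))
  else 0

/-- The second split sequence `ϕ_i = (θ*_0-θ*_i) tr(η_i(A)E*_0)/tr(η_{i-1}(A)E*_0)`,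
meaningful for `1 ≤ i ≤ d`. -/
noncomputable def ϕ (i : ℕ) : K :=
  if h : i < d + 1 then
    (L.θs 0 - L.θs ⟨i, h⟩) * (LinearMap.trace K V (L.eta i * L.Es 0))
      / (LinearMap.trace K V (L.eta (i-1) * L.Es 0))
  else 0

/-- The switching element `S = ∑_r (ϕ_d⋯ϕ_{d-r+1})/(φ_1⋯φ_r) E_r`. -/
noncomputable def S : Module.End K V :=
  ∑ r : Fin (d+1),
    ((∏ k ∈ Finset.Icc (d - (r:ℕ) + 1) d, L.ϕ k) / (∏ k ∈ Finset.Icc 1 (r:ℕ), L.φ k)) • L.E r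

/-- The dual switching element `S* = ∑_r (ϕ_1⋯ϕ_r)/(φ_1⋯φ_r) E*_r`. -/
noncomputable def Ss : Module.End K V :=
  ∑ r : Fin (d+1),
    ((∏ k ∈ Finset.Icc 1 (r:ℕ), L.ϕ k) / (∏ k ∈ Finset.Icc 1 (r:ℕ), L.φ k)) • L.Es r

end LeonardSystem

namespace LeonardSystem
variable {K : Type} [Field K] {V : Type} [AddCommGroup V] [Module K V] {d : ℕ}
  (L : LeonardSystem K V d)

/-- chosen eigenvector of `A` -/
noncomputable def ev (i : Fin (d+1)) : V :=
  ((L.hEig i).exists_hasEigenvector).choose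

lemma ev_spec (i : Fin (d+1)) : Module.End.HasEigenvector L.A (L.θ i) (L.ev i) :=
  ((L.hEig i).exists_hasEigenvector).choose_spec

lemma ev_eigen (i : Fin (d+1)) : L.A (L.ev i) = L.θ i • L.ev i :=
  Module.End.mem_eigenspace_iff.1 (L.ev_spec i).1

lemma ev_ne (i : Fin (d+1)) : L.ev i ≠ 0 := (L.ev_spec i).2

noncomputable def evs (i : Fin (d+1)) : V :=
  ((L.hEigs i).exists_hasEigenvector).choose

lemma evs_spec (i : Fin (d+1)) : Module.End.HasEigenvector L.As (L.θs i) (L.evs i) :=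
  ((L.hEigs i).exists_hasEigenvector).choose_spec

lemma evs_eigen (i : Fin (d+1)) : L.As (L.evs i) = L.θs i • L.evs i :=
  Module.End.mem_eigenspace_iff.1 (L.evs_spec i).1

lemma evs_ne (i : Fin (d+1)) : L.evs i ≠ 0 := (L.evs_spec i).2

lemma E_ev (i j : Fin (d+1)) : L.E i (L.ev j) = if i = j then L.ev j else 0 :=
  mf_E_eigen L.A L.θ L.θ_inj i j (L.ev_eigen j)

lemma Es_evs (i j : Fin (d+1)) : L.Es i (L.evs j) = if i = j then L.evs j else 0 :=
  mf_E_eigen L.As L.θs L.θs_inj i j (L.evs_eigen j)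

lemma li_ev : LinearIndependent K L.ev := by
  rw [Fintype.linearIndependent_iff]
  intro g hg i
  have := congrArg (L.E i) hg
  rw [map_sum, map_zero] at this
  simp only [map_smul, E_ev] at this
  rw [Finset.sum_eq_single i] at this
  · rw [if_pos rfl] at this
    exact (smul_eq_zero.1 this).resolve_right (L.ev_ne i)
  · intro j _ hji; rw [if_neg (Ne.symm hji), smul_zero]
  · intro h; exact absurd (Finset.mem_univ i) h

lemma li_evs : LinearIndependent K L.evs := by
  rw [Fintype.linearIndependent_iff]
  intro g hg i
  have := congrArg (L.Es i) hg
  rw [map_sum, map_zero] at this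
  simp only [map_smul, Es_evs] at this
  rw [Finset.sum_eq_single i] at this
  · rw [if_pos rfl] at this
    exact (smul_eq_zero.1 this).resolve_right (L.evs_ne i)
  · intro j _ hji; rw [if_neg (Ne.symm hji), smul_zero]
  · intro h; exact absurd (Finset.mem_univ i) h

noncomputable def bA : Module.Basis (Fin (d+1)) K V := by
  have := L.hfin
  exact basisOfLinearIndependentOfCardEqFinrank L.li_ev (by simp [L.hdim])

lemma bA_eq (i : Fin (d+1)) : L.bA i = L.ev i := by
  unfold bA
  simp [coe_basisOfLinearIndependentOfCardEqFinrank]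

noncomputable def bAs : Module.Basis (Fin (d+1)) K V := by
  have := L.hfin
  exact basisOfLinearIndependentOfCardEqFinrank L.li_evs (by simp [L.hdim])

lemma bAs_eq (i : Fin (d+1)) : L.bAs i = L.evs i := by
  unfold bAs
  simp [coe_basisOfLinearIndependentOfCardEqFinrank]

lemma E_apply (i : Fin (d+1)) (w : V) : L.E i w = (L.bA.repr w i) • L.ev i := by
  conv_lhs => rw [← L.bA.sum_repr w]
  rw [map_sum]
  rw [Finset.sum_eq_single i]
  · rw [map_smul, bA_eq, E_ev, if_pos rfl]
  · intro j _ hji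
    rw [map_smul, bA_eq, E_ev, if_neg (Ne.symm hji), smul_zero]
  · intro h; exact absurd (Finset.mem_univ i) h

lemma Es_apply (i : Fin (d+1)) (w : V) : L.Es i w = (L.bAs.repr w i) • L.evs i := by
  conv_lhs => rw [← L.bAs.sum_repr w]
  rw [map_sum]
  rw [Finset.sum_eq_single i]
  · rw [map_smul, bAs_eq, Es_evs, if_pos rfl]
  · intro j _ hji
    rw [map_smul, bAs_eq, Es_evs, if_neg (Ne.symm hji), smul_zero]
  · intro h; exact absurd (Finset.mem_univ i) h

lemma sum_E : ∑ i : Fin (d+1), L.E i = 1 :=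
  mf_sum_E L.A L.θ L.θ_inj

lemma sum_Es : ∑ i : Fin (d+1), L.Es i = 1 :=
  mf_sum_E L.As L.θs L.θs_inj

lemma E_mul_aeval (i : Fin (d+1)) (p : Polynomial K) :
    L.E i * Polynomial.aeval L.A p = Polynomial.eval (L.θ i) p • L.E i :=
  mf_E_mul_aeval L.A L.θ L.hfin L.hdim L.θ_inj L.hEig i p

lemma Es_mul_aeval (i : Fin (d+1)) (p : Polynomial K) :
    L.Es i * Polynomial.aeval L.As p = Polynomial.eval (L.θs i) p • L.Es i :=
  mf_E_mul_aeval L.As L.θs L.hfin L.hdim L.θs_inj L.hEigs i p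

lemma E_aeval_apply (i : Fin (d+1)) (p : Polynomial K) (w : V) :
    L.E i (Polynomial.aeval L.A p w) = Polynomial.eval (L.θ i) p • L.E i w := by
  have := congrArg (fun f : Module.End K V => f w) (L.E_mul_aeval i p)
  simpa [Module.End.mul_apply] using this

lemma Es_aeval_apply (i : Fin (d+1)) (p : Polynomial K) (w : V) :
    L.Es i (Polynomial.aeval L.As p w) = Polynomial.eval (L.θs i) p • L.Es i w := by
  have := congrArg (fun f : Module.End K V => f w) (L.Es_mul_aeval i p)
  simpa [Module.End.mul_apply] using this

lemma Es_As_apply (i : Fin (d+1)) (w : V) :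
    L.Es i (L.As w) = L.θs i • L.Es i w := by
  have := L.Es_aeval_apply i Polynomial.X w
  simpa using this

end LeonardSystem


namespace LeonardSystem
variable {K : Type} [Field K] {V : Type} [AddCommGroup V] [Module K V] {d : ℕ}
  (L : LeonardSystem K V d)

/-- The `E*` family as a ℕ-indexed tridiagonal system for `A`. -/
noncomputable def TEs : Tri K V d where
  P n := if h : n < d+1 then L.Es ⟨n,h⟩ else 0
  B := L.A
  x n := if h : n < d+1 then L.evs ⟨n,h⟩ else 0
  hx n hn := by rw [dif_pos (by omega)]; exact L.evs_ne _
  hP0 n hn := by rw [dif_neg (by omega)]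
  hPx n hn m hm := by
    rw [dif_pos (by omega : n < d+1), dif_pos (by omega : m < d+1), Es_evs]
    by_cases h : n = m
    · subst h; simp
    · rw [if_neg (fun he => h (by simpa [Fin.ext_iff] using he)), if_neg h]
  hsum w := by
    have h1 : ∑ n ∈ Finset.range (d+1),
        (if h : n < d+1 then L.Es ⟨n,h⟩ else 0) w = ∑ i : Fin (d+1), L.Es i w := by
      rw [← Fin.sum_univ_eq_sum_range (fun n => (if h : n < d+1 then L.Es ⟨n,h⟩ else 0) w)]
      refine Finset.sum_congr rfl (fun i _ => ?_)
      simp [Nat.le_of_lt_succ i.isLt]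
    rw [h1, ← LinearMap.sum_apply, L.sum_Es, Module.End.one_apply]
  hspan n w := by
    by_cases h : n < d+1
    · rw [dif_pos h, dif_pos h]; exact ⟨L.bAs.repr w ⟨n,h⟩, L.Es_apply _ w⟩
    · rw [dif_neg h]; exact ⟨0, by simp⟩
  hfar n m hnm w := by
    by_cases h : n < d+1
    · by_cases h' : m < d+1
      · rw [dif_pos h, dif_pos h']
        have := congrArg (fun f : Module.End K V => f w)
          (L.hFars ⟨n,h⟩ ⟨m,h'⟩ (by simpa using hnm))
        simpa [Module.End.mul_apply, Es] using this
      · rw [dif_neg h']; simp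
    · rw [dif_neg h]; simp
  hnear n m hn hm hadj := by
    have hne := L.hNears ⟨n, by omega⟩ ⟨m, by omega⟩ (by simpa using hadj)
    rw [Ne, LinearMap.ext_iff] at hne
    push_neg at hne
    obtain ⟨w, hw⟩ := hne
    refine ⟨w, ?_⟩
    rw [dif_pos (by omega : n < d+1), dif_pos (by omega : m < d+1)]
    simpa [Module.End.mul_apply, Es] using hw

/-- The `E` family as a ℕ-indexed tridiagonal system for `A*`. -/
noncomputable def TE : Tri K V d where
  P n := if h : n < d+1 then L.E ⟨n,h⟩ else 0
  B := L.As
  x n := if h : n < d+1 then L.ev ⟨n,h⟩ else 0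
  hx n hn := by rw [dif_pos (by omega)]; exact L.ev_ne _
  hP0 n hn := by rw [dif_neg (by omega)]
  hPx n hn m hm := by
    rw [dif_pos (by omega : n < d+1), dif_pos (by omega : m < d+1), E_ev]
    by_cases h : n = m
    · subst h; simp
    · rw [if_neg (fun he => h (by simpa [Fin.ext_iff] using he)), if_neg h]
  hsum w := by
    have h1 : ∑ n ∈ Finset.range (d+1),
        (if h : n < d+1 then L.E ⟨n,h⟩ else 0) w = ∑ i : Fin (d+1), L.E i w := by
      rw [← Fin.sum_univ_eq_sum_range (fun n => (if h : n < d+1 then L.E ⟨n,h⟩ else 0) w)]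
      refine Finset.sum_congr rfl (fun i _ => ?_)
      simp [Nat.le_of_lt_succ i.isLt]
    rw [h1, ← LinearMap.sum_apply, L.sum_E, Module.End.one_apply]
  hspan n w := by
    by_cases h : n < d+1
    · rw [dif_pos h, dif_pos h]; exact ⟨L.bA.repr w ⟨n,h⟩, L.E_apply _ w⟩
    · rw [dif_neg h]; exact ⟨0, by simp⟩
  hfar n m hnm w := by
    by_cases h : n < d+1
    · by_cases h' : m < d+1
      · rw [dif_pos h, dif_pos h']
        have := congrArg (fun f : Module.End K V => f w)
          (L.hFar ⟨n,h⟩ ⟨m,h'⟩ (by simpa using hnm))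
        simpa [Module.End.mul_apply, E] using this
      · rw [dif_neg h']; simp
    · rw [dif_neg h]; simp
  hnear n m hn hm hadj := by
    have hne := L.hNear ⟨n, by omega⟩ ⟨m, by omega⟩ (by simpa using hadj)
    rw [Ne, LinearMap.ext_iff] at hne
    push_neg at hne
    obtain ⟨w, hw⟩ := hne
    refine ⟨w, ?_⟩
    rw [dif_pos (by omega : n < d+1), dif_pos (by omega : m < d+1)]
    simpa [Module.End.mul_apply, E] using hw

lemma trace_mul_Es0 (M : Module.End K V) :
    LinearMap.trace K V (M * L.Es 0) = L.bAs.repr (M (L.evs 0)) 0 := by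
  have := L.hfin
  classical
  rw [LinearMap.trace_eq_matrix_trace K L.bAs, Matrix.trace]
  rw [Finset.sum_eq_single (0 : Fin (d+1))]
  · rw [Matrix.diag_apply, LinearMap.toMatrix_apply, Module.End.mul_apply, bAs_eq, Es_evs,
      if_pos rfl]
  · intro r _ hr
    rw [Matrix.diag_apply, LinearMap.toMatrix_apply, Module.End.mul_apply, bAs_eq, Es_evs,
      if_neg (Ne.symm hr), map_zero, map_zero]
    rfl
  · intro h; exact absurd (Finset.mem_univ _) h

end LeonardSystem


section Poly
variable {K : Type} [Field K] {d : ℕ} (θ : Fin (d+1) → K)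

/-- `θ` as a ℕ-indexed family. -/
noncomputable def thN (θ : Fin (d+1) → K) : ℕ → K :=
  fun n => if h : n < d+1 then θ ⟨n,h⟩ else 1

lemma thN_eq (i : Fin (d+1)) : thN θ (i : ℕ) = θ i := by
  simp [thN, Nat.le_of_lt_succ i.isLt]

lemma tauP_zero : tauP d θ 0 = 1 := by
  unfold tauP
  rw [Finset.filter_false_of_mem (fun k _ => by omega), Finset.prod_empty]

lemma etaP_zero : etaP d θ 0 = 1 := by
  unfold etaP
  rw [Finset.filter_false_of_mem (fun k _ => by have := k.isLt; omega), Finset.prod_empty]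

lemma tauP_succ {i : ℕ} (hi : i ≤ d) :
    tauP d θ (i+1) = tauP d θ i * (X - C (thN θ i)) := by
  unfold tauP
  have : Finset.univ.filter (fun k : Fin (d+1) => (k:ℕ) < i+1)
      = insert (⟨i, by omega⟩ : Fin (d+1)) (Finset.univ.filter (fun k : Fin (d+1) => (k:ℕ) < i)) := by
    ext k
    simp only [Finset.mem_filter, Finset.mem_insert, Finset.mem_univ, true_and, Fin.ext_iff]
    omega
  rw [this, Finset.prod_insert (by simp)]
  rw [mul_comm]
  congr 2
  unfold thN
  rw [dif_pos (by omega)]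

lemma etaP_succ {i : ℕ} (hi : i < d) :
    etaP d θ (i+1) = etaP d θ i * (X - C (thN θ (d-i))) := by
  unfold etaP
  have : Finset.univ.filter (fun k : Fin (d+1) => d-(i+1) < (k:ℕ))
      = insert (⟨d-i, by omega⟩ : Fin (d+1)) (Finset.univ.filter (fun k : Fin (d+1) => d-i < (k:ℕ))) := by
    ext k
    simp only [Finset.mem_filter, Finset.mem_insert, Finset.mem_univ, true_and, Fin.ext_iff]
    have := k.isLt
    omega
  rw [this, Finset.prod_insert (by simp)]
  rw [mul_comm]
  congr 2
  unfold thN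
  rw [dif_pos (by omega)]

lemma tauP_monic (i : ℕ) : (tauP d θ i).Monic :=
  monic_prod_of_monic _ _ (fun k _ => monic_X_sub_C _)

lemma etaP_monic (i : ℕ) : (etaP d θ i).Monic :=
  monic_prod_of_monic _ _ (fun k _ => monic_X_sub_C _)

lemma tauP_natDegree : ∀ {i : ℕ}, i ≤ d+1 → (tauP d θ i).natDegree = i := by
  intro i
  induction i with
  | zero => intro _; rw [tauP_zero]; simp
  | succ i ih =>
    intro hi
    rw [tauP_succ θ (by omega), Polynomial.Monic.natDegree_mul (tauP_monic θ i) (monic_X_sub_C _),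
      ih (by omega), natDegree_X_sub_C]

lemma etaP_natDegree : ∀ {i : ℕ}, i ≤ d → (etaP d θ i).natDegree = i := by
  intro i
  induction i with
  | zero => intro _; rw [etaP_zero]; simp
  | succ i ih =>
    intro hi
    rw [etaP_succ θ (by omega), Polynomial.Monic.natDegree_mul (etaP_monic θ i) (monic_X_sub_C _),
      ih (by omega), natDegree_X_sub_C]

lemma tauP_eval_root {i : ℕ} (s : Fin (d+1)) (hs : (s:ℕ) < i) :
    eval (θ s) (tauP d θ i) = 0 := by
  unfold tauP
  rw [eval_prod]
  refine Finset.prod_eq_zero (Finset.mem_filter.2 ⟨Finset.mem_univ s, hs⟩) ?_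
  simp

lemma etaP_eval_root {i : ℕ} (s : Fin (d+1)) (hs : d - i < (s:ℕ)) :
    eval (θ s) (etaP d θ i) = 0 := by
  unfold etaP
  rw [eval_prod]
  refine Finset.prod_eq_zero (Finset.mem_filter.2 ⟨Finset.mem_univ s, hs⟩) ?_
  simp

end Poly

namespace LeonardSystem
variable {K : Type} [Field K] {V : Type} [AddCommGroup V] [Module K V] {d : ℕ}
  (L : LeonardSystem K V d)

lemma aeval_ev (p : Polynomial K) (s : Fin (d+1)) :
    Polynomial.aeval L.A p (L.ev s) = eval (L.θ s) p • L.ev s :=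
  Module.End.aeval_apply_of_hasEigenvector (L.ev_spec s)

lemma ann_low {w : V} {c : ℕ} (hc1 : 1 ≤ c) (hc : c ≤ d+1)
    (hw : ∀ s : Fin (d+1), (s:ℕ) < c → L.E s w = 0) :
    Polynomial.aeval L.A (etaP d L.θ (d+1-c)) w = 0 := by
  have hdec : w = ∑ s : Fin (d+1), L.E s w := by
    rw [← LinearMap.sum_apply, L.sum_E, Module.End.one_apply]
  rw [hdec, map_sum]
  refine Finset.sum_eq_zero (fun s _ => ?_)
  rcases lt_or_ge (s:ℕ) c with h | h
  · rw [hw s h, map_zero]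
  · rw [L.E_apply, map_smul, aeval_ev, etaP_eval_root L.θ s (by omega), zero_smul, smul_zero]

lemma ann_high {w : V} {c : ℕ}
    (hw : ∀ s : Fin (d+1), c < (s:ℕ) → L.E s w = 0) :
    Polynomial.aeval L.A (tauP d L.θ (c+1)) w = 0 := by
  have hdec : w = ∑ s : Fin (d+1), L.E s w := by
    rw [← LinearMap.sum_apply, L.sum_E, Module.End.one_apply]
  rw [hdec, map_sum]
  refine Finset.sum_eq_zero (fun s _ => ?_)
  rcases le_or_gt (s:ℕ) c with h | h
  · rw [L.E_apply, map_smul, aeval_ev, tauP_eval_root L.θ s (by omega), zero_smul, smul_zero]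
  · rw [hw s h, map_zero]

end LeonardSystem


namespace Tri
variable {K V : Type} [Field K] [AddCommGroup V] [Module K V] {d : ℕ} (T : Tri K V d)

lemma lead {w : V} (hw : ∀ r, 0 < r → T.P r w = 0) {p : Polynomial K} {i : ℕ}
    (hmon : p.Monic) (hdeg : p.natDegree = i) :
    T.P i ((Polynomial.aeval T.B p) w) = T.P i ((T.B^i) w) := by
  rcases Nat.eq_zero_or_pos i with rfl | hi
  · have hp1 : p = 1 := by
      rwa [← Polynomial.Monic.natDegree_eq_zero hmon]
    rw [hp1]
    simp
  · have hsplit : p = X^i + (p - X^i) := by ring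
    have hqdeg : (p - X^i).natDegree ≤ i - 1 := by
      rw [Polynomial.natDegree_le_iff_coeff_eq_zero]
      intro N hN
      rw [Polynomial.coeff_sub, Polynomial.coeff_X_pow]
      rcases eq_or_ne N i with rfl | hNe
      · rw [if_pos rfl, ← hdeg, Polynomial.Monic.coeff_natDegree hmon, sub_self]
      · rw [if_neg hNe, Polynomial.coeff_eq_zero_of_natDegree_lt (by omega), sub_zero]
    conv_lhs => rw [hsplit]
    rw [map_add, LinearMap.add_apply, map_add, map_pow, Polynomial.aeval_X]
    rw [raise_aeval T hw hqdeg i (by omega), add_zero]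

end Tri

namespace LeonardSystem
variable {K : Type} [Field K] {V : Type} [AddCommGroup V] [Module K V] {d : ℕ}
  (L : LeonardSystem K V d)

/-- `ξ`, a fixed nonzero vector in `E*_0 V`. -/
noncomputable def xis : V := L.evs 0

noncomputable def uu (i : ℕ) : V := Polynomial.aeval L.A (tauP d L.θ i) L.xis

noncomputable def vv (i : ℕ) : V := Polynomial.aeval L.A (etaP d L.θ i) L.xis

lemma TEs_B : L.TEs.B = L.A := rfl

lemma TEs_P_eq (n : ℕ) (h : n < d+1) : L.TEs.P n = L.Es ⟨n,h⟩ := by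
  show (if h' : n < d+1 then L.Es ⟨n,h'⟩ else 0) = _
  rw [dif_pos h]

lemma TEs_x_eq (n : ℕ) (h : n < d+1) : L.TEs.x n = L.evs ⟨n,h⟩ := by
  show (if h' : n < d+1 then L.evs ⟨n,h'⟩ else 0) = _
  rw [dif_pos h]

lemma TE_B : L.TE.B = L.As := rfl

lemma TE_P_eq (n : ℕ) (h : n < d+1) : L.TE.P n = L.E ⟨n,h⟩ := by
  show (if h' : n < d+1 then L.E ⟨n,h'⟩ else 0) = _
  rw [dif_pos h]

lemma PEs_xis {r : ℕ} (hr : 0 < r) : L.TEs.P r L.xis = 0 := by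
  rcases le_or_gt r d with h | h
  · rw [TEs_P_eq L r (by omega), xis, Es_evs, if_neg (by simp [Fin.ext_iff]; omega)]
  · rw [L.TEs.hP0 r h]; rfl

lemma PEs_xis_zero : L.TEs.P 0 L.xis = L.xis := by
  rw [TEs_P_eq L 0 (by omega), xis, Es_evs, if_pos (by simp [Fin.ext_iff])]

lemma xis_ne : L.xis ≠ 0 := L.evs_ne 0

/-- E*-components of `uu i` vanish above `i`. -/
lemma PEs_uu_high {i r : ℕ} (hi : i ≤ d+1) (hr : i < r) : L.TEs.P r (L.uu i) = 0 := by
  have := Tri.raise_aeval L.TEs (w := L.xis) (j := 0)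
    (fun r hr => L.PEs_xis hr) (p := tauP d L.θ i) (m := i)
    (by rw [tauP_natDegree L.θ hi]) r (by omega)
  exact this

lemma PEs_vv_high {i r : ℕ} (hi : i ≤ d) (hr : i < r) : L.TEs.P r (L.vv i) = 0 := by
  have := Tri.raise_aeval L.TEs (w := L.xis) (j := 0)
    (fun r hr => L.PEs_xis hr) (p := etaP d L.θ i) (m := i)
    (by rw [etaP_natDegree L.θ hi]) r (by omega)
  exact this

lemma PEs_pow_ne {i : ℕ} (hi : i ≤ d) : L.TEs.P i ((L.A^i) L.xis) ≠ 0 := by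
  have := Tri.chain_ne L.TEs (w := L.xis) (j := 0) (fun r hr => L.PEs_xis hr)
    (by rw [PEs_xis_zero]; exact L.xis_ne) i (by omega)
  simpa [TEs_B] using this

lemma PEs_uu_self {i : ℕ} (hi : i ≤ d+1) :
    L.TEs.P i (L.uu i) = L.TEs.P i ((L.A^i) L.xis) :=
  Tri.lead L.TEs (fun r hr => L.PEs_xis hr) (tauP_monic L.θ i) (tauP_natDegree L.θ hi)

lemma PEs_vv_self {i : ℕ} (hi : i ≤ d) :
    L.TEs.P i (L.vv i) = L.TEs.P i ((L.A^i) L.xis) :=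
  Tri.lead L.TEs (fun r hr => L.PEs_xis hr) (etaP_monic L.θ i) (etaP_natDegree L.θ hi)

lemma PEs_uu_self_ne {i : ℕ} (hi : i ≤ d) : L.TEs.P i (L.uu i) ≠ 0 := by
  rw [PEs_uu_self L (by omega)]; exact L.PEs_pow_ne hi

/-- E-components of `uu i` vanish below `i`. -/
lemma E_uu_low {i : ℕ} {s : Fin (d+1)} (hs : (s:ℕ) < i) : L.E s (L.uu i) = 0 := by
  rw [uu, E_aeval_apply, tauP_eval_root L.θ s hs, zero_smul]

lemma E_vv_low {i : ℕ} {s : Fin (d+1)} (hs : d - i < (s:ℕ)) : L.E s (L.vv i) = 0 := by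
  rw [vv, E_aeval_apply, etaP_eval_root L.θ s hs, zero_smul]

lemma uu_zero : L.uu 0 = L.xis := by rw [uu, tauP_zero, map_one, Module.End.one_apply]

lemma vv_zero : L.vv 0 = L.xis := by rw [vv, etaP_zero, map_one, Module.End.one_apply]

lemma uu_succ {i : ℕ} (hi : i ≤ d) :
    L.uu (i+1) = L.A (L.uu i) - thN L.θ i • L.uu i := by
  rw [uu, uu, tauP_succ L.θ hi, mul_comm, map_mul, Module.End.mul_apply, map_sub,
    Polynomial.aeval_X, Polynomial.aeval_C, LinearMap.sub_apply, Module.algebraMap_end_apply]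

lemma vv_succ {i : ℕ} (hi : i < d) :
    L.vv (i+1) = L.A (L.vv i) - thN L.θ (d-i) • L.vv i := by
  rw [vv, vv, etaP_succ L.θ hi, mul_comm, map_mul, Module.End.mul_apply, map_sub,
    Polynomial.aeval_X, Polynomial.aeval_C, LinearMap.sub_apply, Module.algebraMap_end_apply]

end LeonardSystem


lemma thN_lt {K : Type} [Field K] {d : ℕ} (θ : Fin (d+1) → K) {n : ℕ} (h : n < d+1) :
    thN θ n = θ ⟨n,h⟩ := dif_pos h

namespace Tri
variable {K V : Type} [Field K] [AddCommGroup V] [Module K V] {d : ℕ} (T : Tri K V d)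

lemma refl_P (n : ℕ) : T.refl.P n = if n ≤ d then T.P (d-n) else 0 := rfl

lemma refl_B : T.refl.B = T.B := rfl

end Tri

namespace LeonardSystem
variable {K : Type} [Field K] {V : Type} [AddCommGroup V] [Module K V] {d : ℕ}
  (L : LeonardSystem K V d)

lemma TE_P_fin (s : Fin (d+1)) : L.TE.P (s:ℕ) = L.E s := by
  rw [TE_P_eq L (s:ℕ) s.isLt]

lemma TEs_P_fin (s : Fin (d+1)) : L.TEs.P (s:ℕ) = L.Es s := by
  rw [TEs_P_eq L (s:ℕ) s.isLt]

lemma PEs_As (r : ℕ) (w : V) :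
    L.TEs.P r (L.As w) = thN L.θs r • L.TEs.P r w := by
  rcases le_or_gt r d with h | h
  · rw [TEs_P_eq L r (by omega), Es_As_apply, thN_lt L.θs (by omega)]
  · rw [L.TEs.hP0 r h]
    simp

lemma TE_P_uu_low {i t : ℕ} (ht : t < i) : L.TE.P t (L.uu i) = 0 := by
  rcases le_or_gt t d with h | h
  · rw [TE_P_eq L t (by omega)]
    exact E_uu_low L (by simpa using ht)
  · rw [L.TE.hP0 t h]; rfl

lemma TE_P_vv_low {i t : ℕ} (ht : d - i < t) : L.TE.P t (L.vv i) = 0 := by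
  rcases le_or_gt t d with h | h
  · rw [TE_P_eq L t (by omega)]
    exact E_vv_low L (by simpa using ht)
  · rw [L.TE.hP0 t h]; rfl

lemma rec_aux_u {i : ℕ} (h1 : 1 ≤ i) (hid : i ≤ d) :
    ∃ c : K, c ≠ 0 ∧ L.As (L.uu i) = thN L.θs i • L.uu i + c • L.uu (i-1) := by
  set w := L.As (L.uu i) - thN L.θs i • L.uu i with hw
  have hWcomp : ∀ r, i-1 < r → L.TEs.P r w = 0 := by
    intro r hr
    rw [hw, map_sub, map_smul, PEs_As]
    rcases eq_or_ne r i with rfl | hne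
    · rw [sub_self]
    · rw [PEs_uu_high L (by omega) (by omega), smul_zero, smul_zero, sub_self]
  have hXcomp : ∀ s : Fin (d+1), (s:ℕ)+1 < i → L.E s w = 0 := by
    intro s hs
    rw [hw, map_sub, map_smul, E_uu_low L (by omega), smul_zero, sub_zero]
    rw [← TE_P_fin, show L.As = L.TE.B from rfl, Tri.comp_B]
    refine Finset.sum_eq_zero (fun t _ => ?_)
    rcases lt_or_ge t i with hti | hti
    · rw [TE_P_uu_low L hti, map_zero, map_zero]
    · exact L.TE.hfar (s:ℕ) t (Or.inl (by omega)) _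
  obtain ⟨a, ha⟩ := L.TEs.hspan (i-1) w
  obtain ⟨b, hb⟩ := L.TEs.hspan (i-1) (L.uu (i-1))
  have hbne : b ≠ 0 := by
    intro h0
    apply PEs_uu_self_ne L (show i-1 ≤ d by omega)
    rw [hb, h0, zero_smul]
  have hkey : L.TEs.P (i-1) (w - (a/b) • L.uu (i-1)) = 0 := by
    rw [map_sub, map_smul, ha, hb, smul_smul, div_mul_cancel₀ a hbne, sub_self]
  set w' := w - (a/b) • L.uu (i-1) with hw'
  have hW'comp : ∀ r, i-1 ≤ r → L.TEs.P r w' = 0 := by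
    intro r hr
    rcases eq_or_lt_of_le hr with rfl | hlt
    · exact hkey
    · rw [hw', map_sub, map_smul, hWcomp r hlt,
        PEs_uu_high L (by omega) (by omega), smul_zero, sub_self]
  have hw'0 : w' = 0 := by
    rcases eq_or_lt_of_le h1 with h1' | h2
    · -- i = 1 : all components vanish
      rw [← L.TEs.hsum w']
      exact Finset.sum_eq_zero (fun r _ => hW'comp r (by omega))
    · -- i ≥ 2
      refine Tri.eq_zero_of_ann L.TEs (j := i-2) (by omega)
        (fun r hr => hW'comp r (by omega))
        (etaP_monic L.θ (d+1-(i-1)))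
        (by rw [etaP_natDegree L.θ (by omega)]; omega) ?_
      show Polynomial.aeval L.A _ w' = 0
      refine ann_low L (by omega) (by omega) (fun s hs => ?_)
      rw [hw', map_sub, map_smul, hXcomp s (by omega), E_uu_low L (by omega),
        smul_zero, sub_self]
  rw [hw'] at hw'0
  have hrec : L.As (L.uu i) = thN L.θs i • L.uu i + (a/b) • L.uu (i-1) := by
    have h2 := sub_eq_zero.1 hw'0
    rw [hw] at h2
    rw [sub_eq_iff_eq_add] at h2
    rw [h2]
    ring_nf
    abel
  refine ⟨a / b, ?_, hrec⟩
  intro hc0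
  rw [hc0, zero_smul, add_zero] at hrec
  have huuz : L.uu i = 0 := by
    refine Tri.eq_zero_of_ann (L.TE.refl) (j := d-i) (by omega) ?_
      (Polynomial.monic_X_sub_C (thN L.θs i))
      (by rw [Polynomial.natDegree_X_sub_C]; omega) ?_
    · intro r hr
      rw [Tri.refl_P]
      by_cases h : r ≤ d
      · rw [if_pos h]
        exact TE_P_uu_low L (by omega)
      · rw [if_neg h]; rfl
    · rw [Tri.refl_B]
      show Polynomial.aeval L.As _ (L.uu i) = 0
      rw [map_sub, Polynomial.aeval_X, Polynomial.aeval_C, LinearMap.sub_apply,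
        Module.algebraMap_end_apply, hrec, sub_self]
  exact PEs_uu_self_ne L hid (by rw [huuz, map_zero])

end LeonardSystem


namespace LeonardSystem
variable {K : Type} [Field K] {V : Type} [AddCommGroup V] [Module K V] {d : ℕ}
  (L : LeonardSystem K V d)

lemma PEs_vv_self_ne {i : ℕ} (hi : i ≤ d) : L.TEs.P i (L.vv i) ≠ 0 := by
  rw [PEs_vv_self L hi]; exact L.PEs_pow_ne hi

lemma rec_aux_v {i : ℕ} (h1 : 1 ≤ i) (hid : i ≤ d) :
    ∃ c : K, c ≠ 0 ∧ L.As (L.vv i) = thN L.θs i • L.vv i + c • L.vv (i-1) := by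
  set w := L.As (L.vv i) - thN L.θs i • L.vv i with hw
  have hWcomp : ∀ r, i-1 < r → L.TEs.P r w = 0 := by
    intro r hr
    rw [hw, map_sub, map_smul, PEs_As]
    rcases eq_or_ne r i with rfl | hne
    · rw [sub_self]
    · rw [PEs_vv_high L (by omega) (by omega), smul_zero, smul_zero, sub_self]
  have hXcomp : ∀ s : Fin (d+1), d-i+1 < (s:ℕ) → L.E s w = 0 := by
    intro s hs
    rw [hw, map_sub, map_smul, E_vv_low L (by omega), smul_zero, sub_zero]
    rw [← TE_P_fin, show L.As = L.TE.B from rfl, Tri.comp_B]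
    refine Finset.sum_eq_zero (fun t _ => ?_)
    rcases le_or_gt t (d-i) with hti | hti
    · exact L.TE.hfar (s:ℕ) t (Or.inr (by omega)) _
    · rw [TE_P_vv_low L hti, map_zero, map_zero]
  obtain ⟨a, ha⟩ := L.TEs.hspan (i-1) w
  obtain ⟨b, hb⟩ := L.TEs.hspan (i-1) (L.vv (i-1))
  have hbne : b ≠ 0 := by
    intro h0
    apply PEs_vv_self_ne L (show i-1 ≤ d by omega)
    rw [hb, h0, zero_smul]
  have hkey : L.TEs.P (i-1) (w - (a/b) • L.vv (i-1)) = 0 := by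
    rw [map_sub, map_smul, ha, hb, smul_smul, div_mul_cancel₀ a hbne, sub_self]
  set w' := w - (a/b) • L.vv (i-1) with hw'
  have hW'comp : ∀ r, i-1 ≤ r → L.TEs.P r w' = 0 := by
    intro r hr
    rcases eq_or_lt_of_le hr with rfl | hlt
    · exact hkey
    · rw [hw', map_sub, map_smul, hWcomp r hlt,
        PEs_vv_high L (by omega) (by omega), smul_zero, sub_self]
  have hw'0 : w' = 0 := by
    rcases eq_or_lt_of_le h1 with h1' | h2
    · rw [← L.TEs.hsum w']
      exact Finset.sum_eq_zero (fun r _ => hW'comp r (by omega))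
    · refine Tri.eq_zero_of_ann L.TEs (j := i-2) (by omega)
        (fun r hr => hW'comp r (by omega))
        (tauP_monic L.θ (d-i+2))
        (by rw [tauP_natDegree L.θ (by omega)]; omega) ?_
      show Polynomial.aeval L.A _ w' = 0
      have heq : d-i+2 = (d-i+1)+1 := by omega
      rw [heq]
      refine ann_high L (fun s hs => ?_)
      rw [hw', map_sub, map_smul, hXcomp s (by omega), E_vv_low L (by omega),
        smul_zero, sub_self]
  rw [hw'] at hw'0
  have hrec : L.As (L.vv i) = thN L.θs i • L.vv i + (a/b) • L.vv (i-1) := by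
    have h2 := sub_eq_zero.1 hw'0
    rw [hw] at h2
    rw [sub_eq_iff_eq_add] at h2
    rw [h2]
    ring_nf
    abel
  refine ⟨a / b, ?_, hrec⟩
  intro hc0
  rw [hc0, zero_smul, add_zero] at hrec
  have hvvz : L.vv i = 0 := by
    refine Tri.eq_zero_of_ann (L.TE) (j := d-i) (by omega) ?_
      (Polynomial.monic_X_sub_C (thN L.θs i))
      (by rw [Polynomial.natDegree_X_sub_C]; omega) ?_
    · intro r hr
      exact TE_P_vv_low L (by omega)
    · show Polynomial.aeval L.As _ (L.vv i) = 0
      rw [map_sub, Polynomial.aeval_X, Polynomial.aeval_C, LinearMap.sub_apply,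
        Module.algebraMap_end_apply, hrec, sub_self]
  exact PEs_vv_self_ne L hid (by rw [hvvz, map_zero])

noncomputable def Fu (i : ℕ) : K := L.bAs.repr (L.uu i) 0

noncomputable def Gv (i : ℕ) : K := L.bAs.repr (L.vv i) 0

lemma PEs_zero_apply (y : V) : L.TEs.P 0 y = (L.bAs.repr y 0) • L.xis := by
  rw [TEs_P_eq L 0 (by omega), Es_apply]
  have h0 : (⟨0, by omega⟩ : Fin (d+1)) = 0 := by
    apply Fin.ext; simp
  rw [h0]
  rfl

lemma Fu_zero : L.Fu 0 = 1 := by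
  rw [Fu, uu_zero, xis, ← bAs_eq, Module.Basis.repr_self]
  simp

lemma Gv_zero : L.Gv 0 = 1 := by
  rw [Gv, vv_zero, xis, ← bAs_eq, Module.Basis.repr_self]
  simp

lemma thN_zero_eq : thN L.θs 0 = L.θs 0 := by
  have := thN_eq L.θs 0
  simpa using this

lemma thNs_ne {i : ℕ} (h1 : 1 ≤ i) (hid : i ≤ d) : thN L.θs 0 ≠ thN L.θs i := by
  rw [thN_lt L.θs (by omega : 0 < d+1), thN_lt L.θs (by omega : i < d+1)]
  intro he
  have := L.θs_inj he
  rw [Fin.ext_iff] at this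
  simp at this
  omega

lemma coeff_rec {i : ℕ} {y z : V} {c : K}
    (hr : L.As y = thN L.θs i • y + c • z) :
    (thN L.θs 0 - thN L.θs i) * (L.bAs.repr y 0) = c * (L.bAs.repr z 0) := by
  have h0 := congrArg (L.TEs.P 0) hr
  rw [PEs_As, map_add, map_smul, map_smul] at h0
  simp only [PEs_zero_apply, smul_smul] at h0
  have h1 : (thN L.θs 0 * L.bAs.repr y 0
      - (thN L.θs i * L.bAs.repr y 0 + c * L.bAs.repr z 0)) • L.xis = 0 := by
    rw [sub_smul, add_smul, h0]
    abel
  rcases smul_eq_zero.1 h1 with h2 | h2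
  · rw [sub_eq_zero] at h2
    linear_combination h2
  · exact absurd h2 L.xis_ne

lemma phi_spec : ∀ i : ℕ, i ≤ d → L.Fu i ≠ 0 ∧
    (1 ≤ i → L.φ i ≠ 0 ∧
      L.As (L.uu i) = thN L.θs i • L.uu i + L.φ i • L.uu (i-1)) := by
  intro i
  induction i with
  | zero =>
    intro _
    exact ⟨by rw [Fu_zero]; exact one_ne_zero, by omega⟩
  | succ i ih =>
    intro hle
    have hFi : L.Fu i ≠ 0 := (ih (by omega)).1
    obtain ⟨c, hc0, hcrec⟩ := L.rec_aux_u (by omega) hle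
    have hcrec' : L.As (L.uu (i+1)) = thN L.θs (i+1) • L.uu (i+1) + c • L.uu i := by
      simpa using hcrec
    have hdec := L.coeff_rec hcrec'
    have hθ : thN L.θs 0 - thN L.θs (i+1) ≠ 0 :=
      sub_ne_zero.2 (L.thNs_ne (by omega) hle)
    have hF1 : L.Fu (i+1) = c * L.Fu i / (thN L.θs 0 - thN L.θs (i+1)) := by
      rw [eq_div_iff hθ]
      rw [Fu, Fu]
      linear_combination hdec
    have hFne : L.Fu (i+1) ≠ 0 := by
      rw [hF1]; exact div_ne_zero (mul_ne_zero hc0 hFi) hθ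
    have htr1 : LinearMap.trace K V (L.tau (i+1) * L.Es 0) = L.Fu (i+1) := by
      rw [trace_mul_Es0]; rfl
    have htr0 : LinearMap.trace K V (L.tau i * L.Es 0) = L.Fu i := by
      rw [trace_mul_Es0]; rfl
    have hφ : L.φ (i+1) = c := by
      unfold φ
      rw [dif_pos (show i+1 < d+1 by omega)]
      rw [show i+1-1 = i from rfl, htr1, htr0]
      have hth : L.θs 0 - L.θs ⟨i+1, by omega⟩ = thN L.θs 0 - thN L.θs (i+1) := by
        rw [thN_zero_eq, thN_lt L.θs (by omega : i+1 < d+1)]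
      rw [hth, hF1]
      field_simp
    refine ⟨hFne, fun _ => ⟨by rw [hφ]; exact hc0, ?_⟩⟩
    rw [hφ]
    simpa using hcrec'

lemma psi_spec : ∀ i : ℕ, i ≤ d → L.Gv i ≠ 0 ∧
    (1 ≤ i → L.ϕ i ≠ 0 ∧
      L.As (L.vv i) = thN L.θs i • L.vv i + L.ϕ i • L.vv (i-1)) := by
  intro i
  induction i with
  | zero =>
    intro _
    exact ⟨by rw [Gv_zero]; exact one_ne_zero, by omega⟩
  | succ i ih =>
    intro hle
    have hFi : L.Gv i ≠ 0 := (ih (by omega)).1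
    obtain ⟨c, hc0, hcrec⟩ := L.rec_aux_v (by omega) hle
    have hcrec' : L.As (L.vv (i+1)) = thN L.θs (i+1) • L.vv (i+1) + c • L.vv i := by
      simpa using hcrec
    have hdec := L.coeff_rec hcrec'
    have hθ : thN L.θs 0 - thN L.θs (i+1) ≠ 0 :=
      sub_ne_zero.2 (L.thNs_ne (by omega) hle)
    have hF1 : L.Gv (i+1) = c * L.Gv i / (thN L.θs 0 - thN L.θs (i+1)) := by
      rw [eq_div_iff hθ]
      rw [Gv, Gv]
      linear_combination hdec
    have hFne : L.Gv (i+1) ≠ 0 := by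
      rw [hF1]; exact div_ne_zero (mul_ne_zero hc0 hFi) hθ
    have htr1 : LinearMap.trace K V (L.eta (i+1) * L.Es 0) = L.Gv (i+1) := by
      rw [trace_mul_Es0]; rfl
    have htr0 : LinearMap.trace K V (L.eta i * L.Es 0) = L.Gv i := by
      rw [trace_mul_Es0]; rfl
    have hφ : L.ϕ (i+1) = c := by
      unfold ϕ
      rw [dif_pos (show i+1 < d+1 by omega)]
      rw [show i+1-1 = i from rfl, htr1, htr0]
      have hth : L.θs 0 - L.θs ⟨i+1, by omega⟩ = thN L.θs 0 - thN L.θs (i+1) := by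
        rw [thN_zero_eq, thN_lt L.θs (by omega : i+1 < d+1)]
      rw [hth, hF1]
      field_simp
    refine ⟨hFne, fun _ => ⟨by rw [hφ]; exact hc0, ?_⟩⟩
    rw [hφ]
    simpa using hcrec'

end LeonardSystem


namespace LeonardSystem
variable {K : Type} [Field K] {V : Type} [AddCommGroup V] [Module K V] {d : ℕ}
  (L : LeonardSystem K V d)

lemma comp_u {r : ℕ} (hr : r ≤ d) {i : ℕ} (hri : r ≤ i) (hi : i ≤ d) :
    L.TEs.P r (L.uu i) =
      (∏ k ∈ Finset.Icc (r+1) i, (L.φ k / (thN L.θs r - thN L.θs k))) •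
        L.TEs.P r (L.uu r) := by
  induction i, hri using Nat.le_induction with
  | base =>
    rw [Finset.Icc_eq_empty (by omega), Finset.prod_empty, one_smul]
  | succ i hri ih =>
    have hrec := ((L.phi_spec (i+1) hi).2 (by omega)).2
    have h0 := congrArg (L.TEs.P r) hrec
    rw [PEs_As, map_add, map_smul, map_smul] at h0
    simp only [Nat.add_sub_cancel] at h0
    have hθ : thN L.θs r - thN L.θs (i+1) ≠ 0 := by
      rw [thN_lt L.θs (by omega), thN_lt L.θs (by omega)]
      intro he
      rw [sub_eq_zero] at he
      have := L.θs_inj he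
      rw [Fin.ext_iff] at this
      simp at this
      omega
    have h1 : (thN L.θs r - thN L.θs (i+1)) • L.TEs.P r (L.uu (i+1))
        = L.φ (i+1) • L.TEs.P r (L.uu i) := by
      rw [sub_smul, h0]
      abel
    have hstep : L.TEs.P r (L.uu (i+1))
        = (L.φ (i+1) / (thN L.θs r - thN L.θs (i+1))) • L.TEs.P r (L.uu i) := by
      have h2 := congrArg (fun v => (thN L.θs r - thN L.θs (i+1))⁻¹ • v) h1
      simp only [smul_smul] at h2
      rw [inv_mul_cancel₀ hθ, one_smul] at h2
      rw [h2, div_eq_inv_mul]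
    rw [hstep, ih (by omega), smul_smul]
    congr 1
    rw [Finset.prod_Icc_succ_top (by omega : r+1 ≤ i+1)]
    ring

lemma comp_v {r : ℕ} (hr : r ≤ d) {i : ℕ} (hri : r ≤ i) (hi : i ≤ d) :
    L.TEs.P r (L.vv i) =
      (∏ k ∈ Finset.Icc (r+1) i, (L.ϕ k / (thN L.θs r - thN L.θs k))) •
        L.TEs.P r (L.vv r) := by
  induction i, hri using Nat.le_induction with
  | base =>
    rw [Finset.Icc_eq_empty (by omega), Finset.prod_empty, one_smul]
  | succ i hri ih =>
    have hrec := ((L.psi_spec (i+1) hi).2 (by omega)).2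
    have h0 := congrArg (L.TEs.P r) hrec
    rw [PEs_As, map_add, map_smul, map_smul] at h0
    simp only [Nat.add_sub_cancel] at h0
    have hθ : thN L.θs r - thN L.θs (i+1) ≠ 0 := by
      rw [thN_lt L.θs (by omega), thN_lt L.θs (by omega)]
      intro he
      rw [sub_eq_zero] at he
      have := L.θs_inj he
      rw [Fin.ext_iff] at this
      simp at this
      omega
    have h1 : (thN L.θs r - thN L.θs (i+1)) • L.TEs.P r (L.vv (i+1))
        = L.ϕ (i+1) • L.TEs.P r (L.vv i) := by
      rw [sub_smul, h0]
      abel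
    have hstep : L.TEs.P r (L.vv (i+1))
        = (L.ϕ (i+1) / (thN L.θs r - thN L.θs (i+1))) • L.TEs.P r (L.vv i) := by
      have h2 := congrArg (fun v => (thN L.θs r - thN L.θs (i+1))⁻¹ • v) h1
      simp only [smul_smul] at h2
      rw [inv_mul_cancel₀ hθ, one_smul] at h2
      rw [h2, div_eq_inv_mul]
    rw [hstep, ih (by omega), smul_smul]
    congr 1
    rw [Finset.prod_Icc_succ_top (by omega : r+1 ≤ i+1)]
    ring

lemma key {ii : ℕ} (hii : ii ≤ d) :
    L.Ss (L.vv ii) =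
      ((∏ k ∈ Finset.Icc 1 ii, L.ϕ k) / (∏ k ∈ Finset.Icc 1 ii, L.φ k)) • L.uu ii := by
  have hφne : ∀ k, 1 ≤ k → k ≤ d → L.φ k ≠ 0 := fun k h1 h2 => ((L.phi_spec k h2).2 h1).1
  unfold Ss
  rw [LinearMap.sum_apply]
  have hdecomp : L.uu ii = ∑ r : Fin (d+1), L.Es r (L.uu ii) := by
    rw [← LinearMap.sum_apply, L.sum_Es, Module.End.one_apply]
  conv_rhs => rw [hdecomp]
  rw [Finset.smul_sum]
  refine Finset.sum_congr rfl (fun r _ => ?_)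
  rw [LinearMap.smul_apply]
  rcases le_or_gt (r:ℕ) ii with hri | hri
  · have hrd : (r:ℕ) ≤ d := by omega
    rw [← TEs_P_fin, comp_v L hrd hri hii, comp_u L hrd hri hii,
      PEs_vv_self L hrd, PEs_uu_self L (by omega), smul_smul, smul_smul]
    congr 1
    -- scalar identity
    have hDne : ∀ k ∈ Finset.Icc ((r:ℕ)+1) ii, thN L.θs (r:ℕ) - thN L.θs k ≠ 0 := by
      intro k hk
      rw [Finset.mem_Icc] at hk
      rw [thN_lt L.θs (by omega), thN_lt L.θs (by omega)]
      intro he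
      rw [sub_eq_zero] at he
      have := L.θs_inj he
      rw [Fin.ext_iff] at this
      simp at this
      omega
    have hsφ : ∏ k ∈ Finset.Icc 1 ii, L.φ k
        = (∏ k ∈ Finset.Icc 1 (r:ℕ), L.φ k) * ∏ k ∈ Finset.Icc ((r:ℕ)+1) ii, L.φ k := by
      rw [show Finset.Icc 1 ii = Finset.Ioc 0 ii from (Finset.Icc_add_one_left_eq_Ioc 0 ii),
        show Finset.Icc 1 (r:ℕ) = Finset.Ioc 0 (r:ℕ) from (Finset.Icc_add_one_left_eq_Ioc 0 (r:ℕ)),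
        show Finset.Icc ((r:ℕ)+1) ii = Finset.Ioc (r:ℕ) ii from (Finset.Icc_add_one_left_eq_Ioc (r:ℕ) ii)]
      exact (Finset.prod_Ioc_consecutive _ (by omega) (by omega)).symm
    have hsϕ : ∏ k ∈ Finset.Icc 1 ii, L.ϕ k
        = (∏ k ∈ Finset.Icc 1 (r:ℕ), L.ϕ k) * ∏ k ∈ Finset.Icc ((r:ℕ)+1) ii, L.ϕ k := by
      rw [show Finset.Icc 1 ii = Finset.Ioc 0 ii from (Finset.Icc_add_one_left_eq_Ioc 0 ii),
        show Finset.Icc 1 (r:ℕ) = Finset.Ioc 0 (r:ℕ) from (Finset.Icc_add_one_left_eq_Ioc 0 (r:ℕ)),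
        show Finset.Icc ((r:ℕ)+1) ii = Finset.Ioc (r:ℕ) ii from (Finset.Icc_add_one_left_eq_Ioc (r:ℕ) ii)]
      exact (Finset.prod_Ioc_consecutive _ (by omega) (by omega)).symm
    have hQr : (∏ k ∈ Finset.Icc 1 (r:ℕ), L.φ k) ≠ 0 := by
      rw [Finset.prod_ne_zero_iff]
      intro k hk
      rw [Finset.mem_Icc] at hk
      exact hφne k hk.1 (by omega)
    have hQm : (∏ k ∈ Finset.Icc ((r:ℕ)+1) ii, L.φ k) ≠ 0 := by
      rw [Finset.prod_ne_zero_iff]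
      intro k hk
      rw [Finset.mem_Icc] at hk
      exact hφne k (by omega) (by omega)
    have hDprod : (∏ k ∈ Finset.Icc ((r:ℕ)+1) ii, (thN L.θs (r:ℕ) - thN L.θs k)) ≠ 0 := by
      rw [Finset.prod_ne_zero_iff]
      exact hDne
    rw [Finset.prod_div_distrib, Finset.prod_div_distrib, hsφ, hsϕ]
    field_simp
  · rw [← TEs_P_fin, PEs_vv_high L hii hri, PEs_uu_high L (by omega) hri,
      smul_zero, smul_zero]

end LeonardSystem




/-- `S* η_i(A) E*_0 = (ϕ_1⋯ϕ_i)/(φ_1⋯φ_i) τ_i(A) E*_0`. -/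
theorem LeonardSystem.Ss_eta_Es0 {K : Type} [Field K] {V : Type}
    [AddCommGroup V] [Module K V] {d : ℕ} (L : LeonardSystem K V d) (i : Fin (d+1)) :
    L.Ss * (L.eta (i:ℕ) * L.Es 0) =
      ((∏ k ∈ Finset.Icc 1 (i:ℕ), L.ϕ k) / (∏ k ∈ Finset.Icc 1 (i:ℕ), L.φ k)) •
        (L.tau (i:ℕ) * L.Es 0) := by
  have hii : (i:ℕ) ≤ d := by omega
  apply LinearMap.ext
  intro wv
  rw [Module.End.mul_apply, Module.End.mul_apply, LinearMap.smul_apply, Module.End.mul_apply]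
  have hE0 : L.Es 0 wv = (L.bAs.repr wv 0) • L.xis := by
    rw [LeonardSystem.Es_apply]; rfl
  rw [hE0, map_smul, map_smul, map_smul]
  rw [smul_comm]
  congr 1
  exact L.key hii
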